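/- arXiv:2208.09682 — 2 statements merged into one kernel-verified Lean document; each statement's English description precedes it below -/
import Mathlib

section
/- Let R > 0, s ∈ (0,1), n ≥ 1, and let Ω ⊂ B_{3R/4} ∖ B_{R/4} be bounded. Define w(x) = 1 - e^{β(|x|² - R²)} for |x| ≤ R and w(x) = 0 otherwise. Then for β > 0 sufficiently large (depending on n, s, R), there exists α₀ > 0 such that -Δw(x) + (-Δ)^s w(x) ≥ α₀ for all x ∈ Ω, while w > 0 on Ω̄ and w ≥ 0 on ℝⁿ. -/
open Metric MeasureTheory

theorem lap_aux (n : ℕ) (R β : ℝ) (w : EuclideanSpace ℝ (Fin n) → ℝ)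
    (hw : ∀ x, w x = if ‖x‖ ≤ R then 1 - Real.exp (β * (‖x‖ ^ 2 - R ^ 2)) else 0)
    (x : EuclideanSpace ℝ (Fin n)) (hx : ‖x‖ < R) :
    (∑ i : Fin n, fderiv ℝ (fun y => fderiv ℝ w y (EuclideanSpace.single i 1)) x
      (EuclideanSpace.single i 1))
    = -(2 * β * Real.exp (β * (‖x‖ ^ 2 - R ^ 2)) * (2 * β * ‖x‖ ^ 2 + n)) := by
  have hde : ∀ y : EuclideanSpace ℝ (Fin n),
      HasFDerivAt (fun y : EuclideanSpace ℝ (Fin n) => Real.exp (β * (‖y‖ ^ 2 - R ^ 2)))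
        (Real.exp (β * (‖y‖ ^ 2 - R ^ 2)) • (β • ((2 : ℕ) • innerSL ℝ y))) y := by
    intro y
    have h0 : HasFDerivAt (fun y : EuclideanSpace ℝ (Fin n) => ‖y‖ ^ 2)
        ((2 : ℕ) • innerSL ℝ y) y := by
      simpa using (hasFDerivAt_id y).norm_sq
    exact ((h0.sub_const (R ^ 2)).const_mul β).exp
  have hx' : x ∈ ball (0 : EuclideanSpace ℝ (Fin n)) R := mem_ball_zero_iff.mpr hx
  have hwe : Set.EqOn w (fun y => 1 - Real.exp (β * (‖y‖ ^ 2 - R ^ 2)))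
      (ball (0 : EuclideanSpace ℝ (Fin n)) R) := by
    intro y hy
    rw [hw y, if_pos (mem_ball_zero_iff.mp hy).le]
  have hfd1 : ∀ i : Fin n, Set.EqOn (fun y => fderiv ℝ w y (EuclideanSpace.single i 1))
      (fun y => -(2 * β) * (Real.exp (β * (‖y‖ ^ 2 - R ^ 2)) * y i))
      (ball (0 : EuclideanSpace ℝ (Fin n)) R) := by
    intro i y hy
    have hD : HasFDerivAt w
        (-(Real.exp (β * (‖y‖ ^ 2 - R ^ 2)) • (β • ((2 : ℕ) • innerSL ℝ y)))) y :=
      ((hde y).const_sub 1).congr_of_eventuallyEq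
        (hwe.eventuallyEq_of_mem (isOpen_ball.mem_nhds hy))
    simp only [hD.fderiv]
    simp only [ContinuousLinearMap.neg_apply, ContinuousLinearMap.smul_apply,
      innerSL_apply_apply, smul_eq_mul, EuclideanSpace.inner_single_right, map_one, one_mul,
      nsmul_eq_mul, Nat.cast_ofNat, starRingEnd_apply, star_trivial]
    ring
  have hkey : ∀ i : Fin n, fderiv ℝ (fun y => fderiv ℝ w y (EuclideanSpace.single i 1)) x
      (EuclideanSpace.single i 1)
      = -(2 * β) * (Real.exp (β * (‖x‖ ^ 2 - R ^ 2)) * (2 * β * (x i) ^ 2 + 1)) := by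
    intro i
    have heq := (hfd1 i).eventuallyEq_of_mem (isOpen_ball.mem_nhds hx')
    rw [heq.fderiv_eq]
    have hproj : HasFDerivAt (fun y : EuclideanSpace ℝ (Fin n) => (y i : ℝ))
        (EuclideanSpace.proj (𝕜 := ℝ) i) x := (EuclideanSpace.proj (𝕜 := ℝ) i).hasFDerivAt
    have hmul : HasFDerivAt (fun y : EuclideanSpace ℝ (Fin n) =>
        -(2 * β) * (Real.exp (β * (‖y‖ ^ 2 - R ^ 2)) * y i)) _ x :=
      ((hde x).mul hproj).const_mul (-(2 * β))
    rw [hmul.fderiv]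
    simp only [ContinuousLinearMap.smul_apply, ContinuousLinearMap.add_apply,
      innerSL_apply_apply, smul_eq_mul, PiLp.proj_apply, nsmul_eq_mul,
      EuclideanSpace.inner_single_right, map_one, one_mul, EuclideanSpace.single_apply,
      starRingEnd_apply, star_trivial, if_true]
    ring
  have hsum : ∑ i : Fin n, (x i) ^ 2 = ‖x‖ ^ 2 := by
    rw [EuclideanSpace.norm_eq, Real.sq_sqrt (by positivity)]
    simp [Real.norm_eq_abs, sq_abs]
  calc (∑ i : Fin n, fderiv ℝ (fun y => fderiv ℝ w y (EuclideanSpace.single i 1)) x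
      (EuclideanSpace.single i 1))
      = ∑ i : Fin n, (-(2 * β) * (Real.exp (β * (‖x‖ ^ 2 - R ^ 2)) * (2 * β * (x i) ^ 2 + 1))) :=
        Finset.sum_congr rfl fun i _ => hkey i
    _ = ∑ i : Fin n, ((-(2 * β) * Real.exp (β * (‖x‖ ^ 2 - R ^ 2)) * 2 * β) * (x i) ^ 2
          + (-(2 * β) * Real.exp (β * (‖x‖ ^ 2 - R ^ 2)))) :=
        Finset.sum_congr rfl fun i _ => by ring
    _ = (-(2 * β) * Real.exp (β * (‖x‖ ^ 2 - R ^ 2)) * 2 * β) * (∑ i : Fin n, (x i) ^ 2)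
          + n * (-(2 * β) * Real.exp (β * (‖x‖ ^ 2 - R ^ 2))) := by
        rw [Finset.sum_add_distrib, ← Finset.mul_sum, Finset.sum_const, Finset.card_univ,
          Fintype.card_fin, nsmul_eq_mul]
    _ = -(2 * β * Real.exp (β * (‖x‖ ^ 2 - R ^ 2)) * (2 * β * ‖x‖ ^ 2 + n)) := by
        rw [hsum]; ring

theorem g0_integrable (n : ℕ) (s R : ℝ) (hs0 : 0 < s) (hR : 0 < R) :
    Integrable (fun z : EuclideanSpace ℝ (Fin n) =>
      if ‖z‖ ≤ R / 4 then 0 else (‖z‖ ^ ((n : ℝ) + 2 * s))⁻¹) := by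
  set r : ℝ := (n : ℝ) + 2 * s with hrdef
  have hr0 : 0 < r := by positivity
  have hrn : (Module.finrank ℝ (EuclideanSpace ℝ (Fin n)) : ℝ) < r := by
    rw [finrank_euclideanSpace_fin, hrdef]; linarith
  set K : ℝ := (1 + 4 / R) ^ r with hK
  have hbase := (integrable_one_add_norm (E := EuclideanSpace ℝ (Fin n)) (μ := volume)
    hrn).const_mul K
  refine hbase.mono' ?_ (Filter.Eventually.of_forall fun z => ?_)
  · apply Measurable.aestronglyMeasurable
    exact Measurable.ite (measurableSet_le measurable_norm measurable_const)
      measurable_const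
      ((continuous_norm.rpow_const fun _ => Or.inr hr0.le).measurable.inv)
  · by_cases hz : ‖z‖ ≤ R / 4
    · rw [if_pos hz]
      simp only [norm_zero]
      have : (0:ℝ) < 1 + ‖z‖ := by positivity
      positivity
    · rw [if_neg hz]
      push_neg at hz
      have hz0 : 0 < ‖z‖ := lt_trans (by positivity) hz
      have ha : 0 < ‖z‖ ^ r := Real.rpow_pos_of_pos hz0 r
      have hb : 0 < (1 + ‖z‖) ^ r := Real.rpow_pos_of_pos (by positivity) r
      rw [Real.norm_eq_abs, abs_of_nonneg (inv_nonneg.mpr ha.le), Real.rpow_neg (by positivity)]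
      have h1 : 1 + ‖z‖ ≤ (1 + 4 / R) * ‖z‖ := by
        have h2 : (1:ℝ) ≤ 4 / R * ‖z‖ := by
          rw [div_mul_eq_mul_div, le_div_iff₀ hR]
          linarith
        nlinarith
      have h2 : (1 + ‖z‖) ^ r ≤ K * ‖z‖ ^ r := by
        calc (1 + ‖z‖) ^ r ≤ ((1 + 4 / R) * ‖z‖) ^ r :=
              Real.rpow_le_rpow (by positivity) h1 hr0.le
          _ = K * ‖z‖ ^ r := Real.mul_rpow (by positivity) (norm_nonneg z)
      have h3 : 1 / (‖z‖ ^ r) ≤ K / ((1 + ‖z‖) ^ r) :=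
        (div_le_div_iff₀ ha hb).mpr (by linarith)
      simpa [one_div, div_eq_mul_inv] using h3

set_option maxHeartbeats 1000000 in
/-- For `β` large enough (depending on `n, s, R`), the barrier
`w(x) = 1 - e^{β(|x|²-R²)}` on `B_R` (extended by `0`) satisfies
`-Δw + (-Δ)ˢ w ≥ α₀ > 0` on `Ω ⊂ B_{3R/4} ∖ B_{R/4}`, with `w > 0` on `Ω̄`
and `w ≥ 0` on `ℝⁿ`. -/
theorem barrier_supersolution
    (n : ℕ) (hn : 1 ≤ n) (s R : ℝ) (hs0 : 0 < s) (hs1 : s < 1) (hR : 0 < R)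
    (Ω : Set (EuclideanSpace ℝ (Fin n)))
    (hΩ : Ω ⊆ ball (0 : EuclideanSpace ℝ (Fin n)) (3 * R / 4) \
      ball (0 : EuclideanSpace ℝ (Fin n)) (R / 4))
    (hΩbdd : Bornology.IsBounded Ω) :
    ∃ β₀ > (0 : ℝ), ∀ β ≥ β₀,
      ∀ w : EuclideanSpace ℝ (Fin n) → ℝ,
        (∀ x, w x = if ‖x‖ ≤ R then 1 - Real.exp (β * (‖x‖ ^ 2 - R ^ 2)) else 0) →
        ∃ α₀ > (0 : ℝ),
          (∀ x ∈ Ω,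
            -(∑ i : Fin n,
                fderiv ℝ (fun y => fderiv ℝ w y (EuclideanSpace.single i 1)) x
                  (EuclideanSpace.single i 1)) +
              -(1 / 2) * ∫ z : EuclideanSpace ℝ (Fin n),
                (w (x + z) + w (x - z) - 2 * w x) / ‖z‖ ^ ((n : ℝ) + 2 * s)
            ≥ α₀) ∧
          (∀ x ∈ closure Ω, 0 < w x) ∧ (∀ x, 0 ≤ w x) := by
  classical
  set g₀ : EuclideanSpace ℝ (Fin n) → ℝ :=
    fun z => if ‖z‖ ≤ R / 4 then 0 else (‖z‖ ^ ((n : ℝ) + 2 * s))⁻¹ with hg₀def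
  have hg₀int : Integrable g₀ := g0_integrable n s R hs0 hR
  have hg₀nn : ∀ z, 0 ≤ g₀ z := by
    intro z
    rw [hg₀def]
    dsimp only
    split_ifs with h
    · exact le_refl 0
    · positivity
  set c : ℝ := ∫ z, g₀ z with hcdef
  have hc0 : 0 ≤ c := integral_nonneg hg₀nn
  refine ⟨max 1 (4 * (c + 1) / R ^ 2), lt_of_lt_of_le one_pos (le_max_left _ _),
    fun β hβ w hw => ?_⟩
  have hβ1 : (1 : ℝ) ≤ β := le_trans (le_max_left _ _) hβ
  have hβc : 4 * (c + 1) / R ^ 2 ≤ β := le_trans (le_max_right _ _) hβ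
  have hβ0 : (0 : ℝ) < β := lt_of_lt_of_le one_pos hβ1
  have hw1 : ∀ y, w y ≤ 1 := by
    intro y
    rw [hw y]
    split_ifs with h
    · linarith [Real.exp_pos (β * (‖y‖ ^ 2 - R ^ 2))]
    · norm_num
  have hw0 : ∀ y, 0 ≤ w y := by
    intro y
    rw [hw y]
    split_ifs with h
    · have h1 : ‖y‖ ^ 2 ≤ R ^ 2 := by nlinarith [norm_nonneg y]
      have h2 : β * (‖y‖ ^ 2 - R ^ 2) ≤ 0 := by nlinarith
      linarith [Real.exp_le_one_iff.mpr h2]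
    · exact le_refl 0
  refine ⟨Real.exp (-(β * R ^ 2)), Real.exp_pos _, fun x hx => ?_, fun x hx => ?_, hw0⟩
  · -- main estimate
    obtain ⟨hx3, hx4⟩ := hΩ hx
    have hxu : ‖x‖ < 3 * R / 4 := mem_ball_zero_iff.mp hx3
    have hxl : R / 4 ≤ ‖x‖ := by
      by_contra h
      exact hx4 (mem_ball_zero_iff.mpr (by linarith))
    have hxR : ‖x‖ < R := by linarith
    have hwx : w x = 1 - Real.exp (β * (‖x‖ ^ 2 - R ^ 2)) := by
      rw [hw x, if_pos hxR.le]
    have hM0 : (0 : ℝ) < Real.exp (β * (‖x‖ ^ 2 - R ^ 2)) := Real.exp_pos _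
    rw [lap_aux n R β w hw x hxR]
    -- pointwise bound on the second-difference quotient
    have hfle : ∀ z : EuclideanSpace ℝ (Fin n),
        (w (x + z) + w (x - z) - 2 * w x) / ‖z‖ ^ ((n : ℝ) + 2 * s)
          ≤ 2 * Real.exp (β * (‖x‖ ^ 2 - R ^ 2)) * g₀ z := by
      intro z
      by_cases hz : ‖z‖ ≤ R / 4
      · have hg : g₀ z = 0 := if_pos hz
        rw [hg, mul_zero]
        apply div_nonpos_of_nonpos_of_nonneg _ (Real.rpow_nonneg (norm_nonneg z) _)
        have h1 : ‖x + z‖ ≤ R := by have := norm_add_le x z; linarith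
        have h2 : ‖x - z‖ ≤ R := by have := norm_sub_le x z; linarith
        rw [hw (x + z), if_pos h1, hw (x - z), if_pos h2, hwx]
        set a := β * (‖x + z‖ ^ 2 - R ^ 2) with ha
        set b := β * (‖x - z‖ ^ 2 - R ^ 2) with hb
        have hpar : ‖x + z‖ ^ 2 + ‖x - z‖ ^ 2 = 2 * ‖x‖ ^ 2 + 2 * ‖z‖ ^ 2 := by
          rw [norm_add_sq_real, norm_sub_sq_real]; ring
        have hab : 2 * (β * (‖x‖ ^ 2 - R ^ 2)) ≤ a + b := by
          rw [ha, hb]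
          nlinarith [sq_nonneg ‖z‖, mul_nonneg hβ0.le (sq_nonneg ‖z‖)]
        have h3 : Real.exp (β * (‖x‖ ^ 2 - R ^ 2)) ≤ Real.exp ((a + b) / 2) :=
          Real.exp_le_exp.mpr (by linarith)
        have h4 : 2 * Real.exp ((a + b) / 2) ≤ Real.exp a + Real.exp b := by
          have h5 := sq_nonneg (Real.exp (a / 2) - Real.exp (b / 2))
          have e1 : Real.exp (a / 2) * Real.exp (a / 2) = Real.exp a := by
            rw [← Real.exp_add]; ring_nf
          have e2 : Real.exp (b / 2) * Real.exp (b / 2) = Real.exp b := by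
            rw [← Real.exp_add]; ring_nf
          have e3 : Real.exp (a / 2) * Real.exp (b / 2) = Real.exp ((a + b) / 2) := by
            rw [← Real.exp_add]; ring_nf
          nlinarith
        linarith
      · push_neg at hz
        have hz0 : (0 : ℝ) < ‖z‖ := lt_trans (by positivity) hz
        have hden : (0 : ℝ) < ‖z‖ ^ ((n : ℝ) + 2 * s) := Real.rpow_pos_of_pos hz0 _
        have hnum : w (x + z) + w (x - z) - 2 * w x
            ≤ 2 * Real.exp (β * (‖x‖ ^ 2 - R ^ 2)) := by
          have := hw1 (x + z); have := hw1 (x - z); rw [hwx]; linarith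
        have hg : g₀ z = (‖z‖ ^ ((n : ℝ) + 2 * s))⁻¹ := if_neg (not_le.mpr hz)
        rw [hg]
        calc (w (x + z) + w (x - z) - 2 * w x) / ‖z‖ ^ ((n : ℝ) + 2 * s)
            ≤ (2 * Real.exp (β * (‖x‖ ^ 2 - R ^ 2))) / ‖z‖ ^ ((n : ℝ) + 2 * s) := by gcongr
          _ = 2 * Real.exp (β * (‖x‖ ^ 2 - R ^ 2)) * (‖z‖ ^ ((n : ℝ) + 2 * s))⁻¹ :=
              div_eq_mul_inv _ _
    have hIle : (∫ z : EuclideanSpace ℝ (Fin n),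
        (w (x + z) + w (x - z) - 2 * w x) / ‖z‖ ^ ((n : ℝ) + 2 * s))
        ≤ 2 * Real.exp (β * (‖x‖ ^ 2 - R ^ 2)) * c := by
      by_cases hint : Integrable (fun z : EuclideanSpace ℝ (Fin n) =>
          (w (x + z) + w (x - z) - 2 * w x) / ‖z‖ ^ ((n : ℝ) + 2 * s))
      · calc (∫ z : EuclideanSpace ℝ (Fin n),
            (w (x + z) + w (x - z) - 2 * w x) / ‖z‖ ^ ((n : ℝ) + 2 * s))
            ≤ ∫ z, 2 * Real.exp (β * (‖x‖ ^ 2 - R ^ 2)) * g₀ z :=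
              integral_mono hint (hg₀int.const_mul _) hfle
          _ = 2 * Real.exp (β * (‖x‖ ^ 2 - R ^ 2)) * c := by
              rw [integral_const_mul]
      · rw [integral_undef hint]
        exact mul_nonneg (by positivity) hc0
    have hx2 : R ^ 2 / 16 ≤ ‖x‖ ^ 2 := by nlinarith [norm_nonneg x]
    have hβR : 4 * (c + 1) ≤ β * R ^ 2 := by
      rw [div_le_iff₀ (by positivity)] at hβc
      linarith
    have hMe : Real.exp (-(β * R ^ 2)) ≤ Real.exp (β * (‖x‖ ^ 2 - R ^ 2)) :=
      Real.exp_le_exp.mpr (by nlinarith [sq_nonneg ‖x‖, norm_nonneg x])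
    have hfac : c + 1 ≤ 2 * β * (2 * β * ‖x‖ ^ 2 + (n : ℝ)) := by
      have hn0 : (0 : ℝ) ≤ (n : ℝ) := Nat.cast_nonneg n
      nlinarith [mul_le_mul_of_nonneg_left hβR hβ0.le,
        mul_le_mul_of_nonneg_left hx2 (by positivity : (0:ℝ) ≤ 4 * β ^ 2),
        mul_nonneg hβ0.le hn0, hc0, hβ1]
    have h5 : Real.exp (β * (‖x‖ ^ 2 - R ^ 2)) * (c + 1)
        ≤ 2 * β * Real.exp (β * (‖x‖ ^ 2 - R ^ 2)) * (2 * β * ‖x‖ ^ 2 + (n : ℝ)) := by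
      calc Real.exp (β * (‖x‖ ^ 2 - R ^ 2)) * (c + 1)
          ≤ Real.exp (β * (‖x‖ ^ 2 - R ^ 2)) * (2 * β * (2 * β * ‖x‖ ^ 2 + (n : ℝ))) :=
            mul_le_mul_of_nonneg_left hfac hM0.le
        _ = 2 * β * Real.exp (β * (‖x‖ ^ 2 - R ^ 2)) * (2 * β * ‖x‖ ^ 2 + (n : ℝ)) := by ring
    have h6 : -(1 / 2 : ℝ) * (∫ z : EuclideanSpace ℝ (Fin n),
        (w (x + z) + w (x - z) - 2 * w x) / ‖z‖ ^ ((n : ℝ) + 2 * s))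
        ≥ -(Real.exp (β * (‖x‖ ^ 2 - R ^ 2)) * c) := by linarith
    linarith
  · -- positivity on the closure
    have hsub : Ω ⊆ closedBall (0 : EuclideanSpace ℝ (Fin n)) (3 * R / 4) :=
      fun y hy => ball_subset_closedBall ((hΩ hy).1)
    have hxc : x ∈ closedBall (0 : EuclideanSpace ℝ (Fin n)) (3 * R / 4) :=
      closure_minimal hsub Metric.isClosed_closedBall hx
    have hxn : ‖x‖ ≤ 3 * R / 4 := mem_closedBall_zero_iff.mp hxc
    have hxR : ‖x‖ ≤ R := by linarith
    rw [hw x, if_pos hxR]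
    have h1 : ‖x‖ ^ 2 < R ^ 2 := by nlinarith [norm_nonneg x]
    have h2 : Real.exp (β * (‖x‖ ^ 2 - R ^ 2)) < 1 :=
      Real.exp_lt_one_iff.mpr (by nlinarith)
    linarith
end

section
/- Let X be a Banach space, A: D(A) ⊂ X → X and B: D(A) → X linear operators such that for each λ ≥ λ₀ and f ∈ X the equation Au + λu = f has a unique solution u ∈ D(A) with ‖u‖_{D(A)} ≤ C‖f‖ and (λ - λ₀)‖u‖ ≤ C‖f‖, and such that ‖Bw‖ ≤ C(ε‖w‖_{D(A)} + τ(ε)‖w‖) for all ε > 0. Then there exists λ₁ ≥ λ₀ such that for all λ ≥ λ₁ and all f ∈ X, the equation Au + Bu + λu = f has a unique solution u ∈ D(A). -/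
/-- Abstract perturbation lemma (Banach fixed point): if `A + λ` is uniquely solvable
with the resolvent estimates `‖u‖_{D(A)} ≤ C‖f‖` and `(λ-λ₀)‖u‖ ≤ C‖f‖`, and the
perturbation `B` satisfies `‖Bw‖ ≤ C(ε ‖w‖_{D(A)} + τ(ε) ‖w‖)` for every `ε > 0`,
then `A + B + λ` is uniquely solvable for all `λ` large enough. -/
theorem abstract_perturbation_solvability
    (X D : Type*)
    [NormedAddCommGroup X] [NormedSpace ℝ X] [CompleteSpace X]
    [NormedAddCommGroup D] [NormedSpace ℝ D] [CompleteSpace D]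
    (ι : D →ₗ[ℝ] X) (hι : Function.Injective ι)
    (A B : D →ₗ[ℝ] X) (lam₀ C : ℝ) (hC : 0 < C)
    (hsolve : ∀ lam ≥ lam₀, ∀ f : X, ∃! u : D, A u + lam • ι u = f)
    (hest : ∀ lam ≥ lam₀, ∀ f : X, ∀ u : D, A u + lam • ι u = f →
      ‖u‖ ≤ C * ‖f‖ ∧ (lam - lam₀) * ‖ι u‖ ≤ C * ‖f‖)
    (hB : ∀ ε > (0 : ℝ), ∃ τ > (0 : ℝ), ∀ w : D,
      ‖B w‖ ≤ C * (ε * ‖w‖ + τ * ‖ι w‖)) :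
    ∃ lam₁ ≥ lam₀, ∀ lam ≥ lam₁, ∀ f : X,
      ∃! u : D, A u + B u + lam • ι u = f := by
  have hC2 : (0:ℝ) < C ^ 2 := by positivity
  set ε : ℝ := 1 / (4 * C ^ 2) with hε
  have hεpos : 0 < ε := by positivity
  obtain ⟨τ, hτpos, hτ⟩ := hB ε hεpos
  refine ⟨lam₀ + 4 * C ^ 2 * τ + 1, by nlinarith, ?_⟩
  intro lam hlam f
  have hlam0 : lam ≥ lam₀ := by nlinarith
  have hgap : lam - lam₀ ≥ 4 * C ^ 2 * τ + 1 := by linarith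
  -- The solution operator for the unperturbed problem
  have hTex : ∀ g : X, ∃ u : D, A u + lam • ι u = f - g :=
    fun g => (hsolve lam hlam0 (f - g)).exists
  set T : X → X := fun g => B (hTex g).choose with hT
  have hTspec : ∀ g, A (hTex g).choose + lam • ι (hTex g).choose = f - g :=
    fun g => (hTex g).choose_spec
  -- contraction estimate
  have hlip : ∀ g g' : X, ‖T g - T g'‖ ≤ (1/2) * ‖g - g'‖ := by
    intro g g'
    set u := (hTex g).choose with hu
    set u' := (hTex g').choose with hu'
    have hdiff : A (u - u') + lam • ι (u - u') = g' - g := by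
      simp only [map_sub, smul_sub]
      have h1 := hTspec g
      have h2 := hTspec g'
      rw [show A u - A u' + (lam • ι u - lam • ι u')
          = (A u + lam • ι u) - (A u' + lam • ι u') by abel, h1, h2]
      abel
    obtain ⟨he1, he2⟩ := hest lam hlam0 (g' - g) (u - u') hdiff
    have hBd := hτ (u - u')
    have hTgg : T g - T g' = B (u - u') := by
      simp only [hT, map_sub]
      rfl
    rw [hTgg]
    have hb : (0:ℝ) ≤ ‖ι (u - u')‖ := norm_nonneg _
    have hn : (0:ℝ) ≤ ‖g' - g‖ := norm_nonneg _
    have ha : (0:ℝ) ≤ ‖u - u'‖ := norm_nonneg _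
    have key1 : C * (ε * ‖u - u'‖) ≤ (1/4) * ‖g' - g‖ := by
      have : C * ε * ‖u - u'‖ ≤ C * ε * (C * ‖g' - g‖) := by
        have hce : (0:ℝ) ≤ C * ε := by positivity
        exact mul_le_mul_of_nonneg_left he1 hce
      have hceq : C * ε * C = 1 / 4 := by
        rw [hε]
        field_simp
      nlinarith
    have key2 : C * (τ * ‖ι (u - u')‖) ≤ (1/4) * ‖g' - g‖ := by
      have h4 : (4 * C ^ 2 * τ + 1) * ‖ι (u - u')‖ ≤ (lam - lam₀) * ‖ι (u - u')‖ :=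
        mul_le_mul_of_nonneg_right hgap hb
      nlinarith
    have : ‖B (u - u')‖ ≤ (1/2) * ‖g' - g‖ := by
      calc ‖B (u - u')‖ ≤ C * (ε * ‖u - u'‖ + τ * ‖ι (u - u')‖) := hBd
        _ = C * (ε * ‖u - u'‖) + C * (τ * ‖ι (u - u')‖) := by ring
        _ ≤ (1/4) * ‖g' - g‖ + (1/4) * ‖g' - g‖ := add_le_add key1 key2
        _ = (1/2) * ‖g' - g‖ := by ring
    rwa [norm_sub_rev g g']
  -- T is a contraction
  have hcontr : ContractingWith (2⁻¹ : NNReal) T := by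
    constructor
    · exact NNReal.coe_lt_coe.mp (by norm_num)
    · refine LipschitzWith.of_dist_le_mul fun g g' => ?_
      simpa [dist_eq_norm] using hlip g g'
  obtain ⟨g₀, hg₀, -, -⟩ := hcontr.exists_fixedPoint (0 : X) (edist_ne_top _ _)
  refine ⟨(hTex g₀).choose, ?_, ?_⟩
  · show A (hTex g₀).choose + B (hTex g₀).choose + lam • ι (hTex g₀).choose = f
    have h1 := hTspec g₀
    have h2 : B (hTex g₀).choose = g₀ := hg₀
    rw [show A (hTex g₀).choose + B (hTex g₀).choose + lam • ι (hTex g₀).choose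
        = (A (hTex g₀).choose + lam • ι (hTex g₀).choose) + B (hTex g₀).choose by abel,
      h1, h2]
    abel
  · intro u' hu'
    -- u' solves the unperturbed equation with rhs f - B u'
    have hsol : A u' + lam • ι u' = f - B u' := by
      rw [← hu']; abel
    have hTu' : (hTex (B u')).choose = u' :=
      ((hsolve lam hlam0 (f - B u')).unique (hTspec (B u')) hsol)
    have hfix : T (B u') = B u' := by
      rw [hT]; simp only [hTu']
    have hgeq : B u' = g₀ := hcontr.fixedPoint_unique' hfix hg₀
    rw [← hTu', hgeq]
end
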